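/- Fix 0 ≤ s ≤ t ≤ 1 and m ≥ 1. The symmetrization, in the m variables (t_1,…,t_m) ∈ [0,1]^m, of the function f(t_1,…,t_m) = 1_{[s,t]}(t_1)·∏_{i=2}^{m} 1_{[t_1,t]^c}(t_i) equals (1/m)·1_{A_m} almost everywhere with respect to Lebesgue measure on [0,1]^m, where A_m = ⋃_{i=1}^{m} {(t_1,…,t_m) ∈ [0,1]^m : t_i ∈ [s,t]} and the symmetrization of f is (1/m!)·Σ_{σ ∈ S_m} f(t_{σ(1)},…,t_{σ(m)}). -/

import Mathlib

/-!
STATEMENT 17 (Peccati–Tudor, combinatorial lemma in Remark 3: symmetrization of the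
Clark–Ocone kernel).

For `0 ≤ s ≤ t ≤ 1` and `m ≥ 1`, consider the function on `[0,1]^m`
`f(t₁,…,t_m) = 1_{[s,t]}(t₁) ∏_{i=2}^m 1_{[t₁,t]ᶜ}(t_i)`,
where `[t₁,t]ᶜ` is the complement of `[t₁,t]` in `[0,1]`.  Its symmetrization
`f̃(t₁,…,t_m) = (1/m!) Σ_{σ ∈ S_m} f(t_{σ(1)},…,t_{σ(m)})` equals `(1/m)·1_{A_m}`
almost everywhere with respect to Lebesgue measure on `[0,1]^m`, where
`A_m = ⋃_{i=1}^m {(t₁,…,t_m) ∈ [0,1]^m : t_i ∈ [s,t]}`.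
-/

open MeasureTheory Set


/-- Kernel summand. -/
noncomputable def gKer (s t : ℝ) {m : ℕ} (x : Fin m → ℝ) (j : Fin m) : ℝ :=
  (Set.Icc s t).indicator (fun _ => (1:ℝ)) (x j) *
    ∏ i ∈ Finset.univ.erase j,
      (Set.Icc (0:ℝ) 1 \ Set.Icc (x j) t).indicator (fun _ => (1:ℝ)) (x i)

lemma sum_gKer (s t : ℝ) (hs : 0 ≤ s) {m : ℕ} (x : Fin m → ℝ)
    (hx : ∀ i j : Fin m, i ≠ j → x i ≠ x j) (hxS : ∀ i, x i ∈ Set.Icc (0:ℝ) 1) :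
    ∑ j, gKer s t x j = if ∃ i, x i ∈ Set.Icc s t then 1 else 0 := by
  by_cases hA : ∃ i, x i ∈ Set.Icc s t
  · rw [if_pos hA]
    obtain ⟨i₀, hi₀⟩ := hA
    have hTne : (Finset.univ.filter (fun j : Fin m => x j ≤ t)).Nonempty :=
      ⟨i₀, by simp [hi₀.2]⟩
    obtain ⟨j₀, hj₀mem, hj₀max⟩ := Finset.exists_max_image _ x hTne
    have hj₀t : x j₀ ≤ t := by simpa using hj₀mem
    have hj₀s : s ≤ x j₀ := le_trans hi₀.1 (hj₀max i₀ (by simp [hi₀.2]))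
    rw [Finset.sum_eq_single j₀]
    · -- gKer at j₀ equals 1
      unfold gKer
      rw [Set.indicator_of_mem (Set.mem_Icc.mpr ⟨hj₀s, hj₀t⟩)]
      rw [Finset.prod_eq_one, one_mul]
      intro i hi
      have hij : i ≠ j₀ := (Finset.mem_erase.mp hi).1
      have hnot : x i ∉ Set.Icc (x j₀) t := by
        rintro ⟨h1, h2⟩
        have := hj₀max i (by simp [h2])
        exact hx i j₀ hij (le_antisymm this h1)
      rw [Set.indicator_of_mem (Set.mem_diff _ |>.mpr ⟨hxS i, hnot⟩)]
    · intro j _ hj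
      unfold gKer
      by_cases hjst : x j ∈ Set.Icc s t
      · have hmem : j₀ ∈ Finset.univ.erase j := Finset.mem_erase.mpr ⟨Ne.symm hj, Finset.mem_univ _⟩
        rw [Finset.prod_eq_zero hmem, mul_zero]
        apply Set.indicator_of_notMem
        intro hc
        exact hc.2 ⟨hj₀max j (by simp [hjst.2]), hj₀t⟩
      · rw [Set.indicator_of_notMem hjst, zero_mul]
    · intro h; exact absurd (Finset.mem_univ j₀) h
  · rw [if_neg hA]
    push_neg at hA
    apply Finset.sum_eq_zero
    intro j _
    unfold gKer
    rw [Set.indicator_of_notMem (hA j), zero_mul]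

lemma pairwise_ne_ae {m : ℕ} :
    ∀ᵐ x : Fin m → ℝ ∂volume, ∀ i j : Fin m, i ≠ j → x i ≠ x j := by
  rw [ae_all_iff]
  intro i
  rw [ae_all_iff]
  intro j
  by_cases hij : i = j
  · filter_upwards with x h; exact absurd hij h
  · have hnull : (volume : Measure (Fin m → ℝ)) {x | x i = x j} = 0 := by
      have hset : {x : Fin m → ℝ | x i = x j} =
          (LinearMap.ker (((LinearMap.proj i : (Fin m → ℝ) →ₗ[ℝ] ℝ) - LinearMap.proj j)) : Set (Fin m → ℝ)) := by
        ext x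
        simp [LinearMap.mem_ker, sub_eq_zero, eq_comm]
      rw [hset]
      apply Measure.addHaar_submodule
      rw [Ne, LinearMap.ker_eq_top]
      intro h
      have := congrFun (congrArg DFunLike.coe h) (Pi.single i 1)
      simp [Pi.single_apply, hij] at this
    rw [ae_iff]
    convert hnull using 2
    ext x
    simp [hij]

theorem symmetrization_of_clark_ocone_kernel
    (s t : ℝ) (hs : 0 ≤ s) (hst : s ≤ t) (ht : t ≤ 1)
    (m : ℕ) (hm : 1 ≤ m)
    (f : (Fin m → ℝ) → ℝ)
    (hf : ∀ x : Fin m → ℝ,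
      f x = Set.indicator (Set.Icc s t) (fun _ => (1:ℝ)) (x ⟨0, hm⟩) *
        ∏ i ∈ Finset.univ.erase (⟨0, hm⟩ : Fin m),
          Set.indicator (Set.Icc (0:ℝ) 1 \ Set.Icc (x ⟨0, hm⟩) t) (fun _ => (1:ℝ)) (x i))
    (Am : Set (Fin m → ℝ))
    (hAm : Am = ⋃ i : Fin m, {x : Fin m → ℝ | x i ∈ Set.Icc s t}) :
    ∀ᵐ x ∂((volume : Measure (Fin m → ℝ)).restrict (Set.univ.pi fun _ => Set.Icc (0:ℝ) 1)),
      (1 / (m.factorial : ℝ)) * ∑ σ : Equiv.Perm (Fin m), f (fun i => x (σ i))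
        = (1 / (m : ℝ)) * Set.indicator Am (fun _ => (1:ℝ)) x := by
  obtain ⟨n, rfl⟩ : ∃ n, m = n + 1 := ⟨m - 1, (Nat.succ_pred_eq_of_pos hm).symm⟩
  have h0 : (⟨0, hm⟩ : Fin (n + 1)) = 0 := rfl
  -- Step A: f (x ∘ σ) = gKer s t x (σ 0)
  have hreindex : ∀ (x : Fin (n+1) → ℝ) (σ : Equiv.Perm (Fin (n+1))),
      f (fun i => x (σ i)) = gKer s t x (σ 0) := by
    intro x σ
    rw [hf, h0]
    unfold gKer
    congr 1
    rw [show (Finset.univ.erase (σ 0)) = (Finset.univ.erase (0 : Fin (n+1))).map σ.toEmbedding by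
      rw [Finset.map_erase, Finset.map_univ_equiv]; rfl]
    rw [Finset.prod_map]
    rfl
  -- Step B: sum over permutations
  have hsum : ∀ x : Fin (n+1) → ℝ,
      ∑ σ : Equiv.Perm (Fin (n+1)), gKer s t x (σ 0)
        = (n.factorial : ℝ) * ∑ j, gKer s t x j := by
    intro x
    rw [← Equiv.sum_comp (Equiv.Perm.decomposeFin (n := n)).symm
      (fun σ : Equiv.Perm (Fin (n+1)) => gKer s t x (σ 0))]
    rw [Fintype.sum_prod_type]
    simp only [Equiv.Perm.decomposeFin_symm_apply_zero, Finset.sum_const, Finset.card_univ,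
      Fintype.card_perm, nsmul_eq_mul]
    rw [← Finset.mul_sum, Fintype.card_fin]
  -- a.e. facts
  have hS : MeasurableSet (Set.univ.pi fun _ : Fin (n+1) => Set.Icc (0:ℝ) 1) :=
    MeasurableSet.univ_pi fun _ => measurableSet_Icc
  filter_upwards [ae_restrict_of_ae (pairwise_ne_ae (m := n+1)), ae_restrict_mem hS]
    with x hx hxS
  have hxS' : ∀ i, x i ∈ Set.Icc (0:ℝ) 1 := fun i => hxS i (Set.mem_univ i)
  simp only [hreindex x, hsum x, sum_gKer s t hs x hx hxS']
  have hAm' : Set.indicator Am (fun _ => (1:ℝ)) x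
      = if ∃ i, x i ∈ Set.Icc s t then 1 else 0 := by
    by_cases h : ∃ i, x i ∈ Set.Icc s t
    · rw [if_pos h, Set.indicator_of_mem]
      rw [hAm, Set.mem_iUnion]; exact h
    · rw [if_neg h, Set.indicator_of_notMem]
      rw [hAm, Set.mem_iUnion]; exact h
  rw [hAm']
  have hfac : ((n+1).factorial : ℝ) = (n+1) * n.factorial := by
    push_cast [Nat.factorial_succ]; ring
  rw [hfac]
  have h1 : (n.factorial : ℝ) ≠ 0 := Nat.cast_ne_zero.mpr n.factorial_ne_zero
  have h2 : ((n:ℝ) + 1) ≠ 0 := by positivity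
  field_simp
  push_cast
  ring
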